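/- Let (X_i)_{i∈[n]} be i.i.d. random variables taking values in [0,1] with mean μ. Then for any x > 0, the probability that there exists i ∈ [n] with |Σ_{j=1}^{i}(X_j − μ)| > x is at most 2·exp(−2x²/n). -/

import Mathlib

open MeasureTheory ProbabilityTheory
open Real


/-- Hoeffding's lemma, log form. -/
lemma hoef_log {p : ℝ} (hp0 : 0 ≤ p) (hp1 : p ≤ 1) {t : ℝ} (ht : 0 ≤ t) :
    Real.log (1 - p + p * Real.exp t) - t * p ≤ t ^ 2 / 8 := by
  set D : ℝ → ℝ := fun s => 1 - p + p * Real.exp s with hD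
  have hDpos : ∀ s, 0 < D s := by
    intro s
    have hDs : D s = 1 - p + p * Real.exp s := rfl
    rw [hDs]
    rcases eq_or_lt_of_le hp0 with h | h
    · simp [← h]
    · have := Real.exp_pos s
      nlinarith
  set h : ℝ → ℝ := fun s => s / 4 + p - p * Real.exp s / D s with hh
  have hD' : ∀ s, HasDerivAt D (p * Real.exp s) s := by
    intro s
    exact ((Real.hasDerivAt_exp s).const_mul p).const_add (1 - p)
  have hh' : ∀ s, HasDerivAt h (1 / 4 - p * Real.exp s * (1 - p) / (D s) ^ 2) s := by
    intro s
    have h1 : HasDerivAt (fun s => p * Real.exp s) (p * Real.exp s) s :=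
      (Real.hasDerivAt_exp s).const_mul p
    have h2 : HasDerivAt (fun s => p * Real.exp s / D s)
        ((p * Real.exp s * D s - p * Real.exp s * (p * Real.exp s)) / (D s) ^ 2) s :=
      h1.div (hD' s) (hDpos s).ne'
    have h3 : HasDerivAt (fun s => s / 4 + p) (1 / 4) s := by
      simpa using ((hasDerivAt_id s).div_const 4).add_const p
    have := h3.sub h2
    refine this.congr_deriv ?_
    have : D s = 1 - p + p * Real.exp s := rfl
    rw [this]
    ring
  have hderiv_nonneg : ∀ s, 0 ≤ 1 / 4 - p * Real.exp s * (1 - p) / (D s) ^ 2 := by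
    intro s
    have hD2 : (0:ℝ) < (D s) ^ 2 := pow_pos (hDpos s) 2
    rw [sub_nonneg, div_le_iff₀ hD2]
    have he := (Real.exp_pos s).le
    have : D s = 1 - p + p * Real.exp s := rfl
    nlinarith [sq_nonneg (1 - p - p * Real.exp s), mul_nonneg hp0 he]
  have hmono : Monotone h := by
    have : ∀ s, HasDerivAt h (1 / 4 - p * Real.exp s * (1 - p) / (D s) ^ 2) s := hh'
    exact monotone_of_deriv_nonneg (fun s => (hh' s).differentiableAt) (by
      intro s
      rw [(hh' s).deriv]
      exact hderiv_nonneg s)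
  have hh0 : h 0 = 0 := by
    simp [hh, hD]
  have hhn : ∀ s, 0 ≤ s → 0 ≤ h s := fun s hs => hh0 ▸ hmono hs
  -- now g
  set g : ℝ → ℝ := fun s => s ^ 2 / 8 - (Real.log (D s) - s * p) with hg
  have hg' : ∀ s, HasDerivAt g (h s) s := by
    intro s
    have hlog : HasDerivAt (fun s => Real.log (D s)) (p * Real.exp s / D s) s :=
      (hD' s).log (hDpos s).ne'
    have hsq : HasDerivAt (fun s : ℝ => s ^ 2 / 8) (s / 4) s := by
      have := ((hasDerivAt_pow 2 s).div_const 8)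
      refine this.congr_deriv ?_
      ring
    have hmul : HasDerivAt (fun s : ℝ => s * p) p s := by
      simpa using (hasDerivAt_id s).mul_const p
    have := hsq.sub (hlog.sub hmul)
    refine this.congr_deriv ?_
    simp [hh]
    ring
  have hgmono : MonotoneOn g (Set.Ici (0:ℝ)) := by
    refine monotoneOn_of_deriv_nonneg (convex_Ici 0)
      (fun s _ => ((hg' s).differentiableAt.continuousAt.continuousWithinAt))
      (fun s _ => ((hg' s).differentiableAt.differentiableWithinAt)) ?_
    intro s hs
    rw [(hg' s).deriv]
    rw [interior_Ici] at hs
    exact hhn s (le_of_lt hs)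
  have hg0 : g 0 = 0 := by simp [hg, hD]
  have := hgmono (Set.self_mem_Ici) (Set.mem_Ici.2 ht) ht
  rw [hg0] at this
  have hgt : 0 ≤ g t := this
  simp only [hg] at hgt
  linarith

lemma hoef_mgf {Ω : Type*} {mΩ : MeasurableSpace Ω} {P : Measure Ω} [IsProbabilityMeasure P]
    {X : Ω → ℝ} (hm : Measurable X) (hb : ∀ᵐ ω ∂P, X ω ∈ Set.Icc (0:ℝ) 1)
    {μ t : ℝ} (hμ : ∫ ω, X ω ∂P = μ) (ht : 0 ≤ t) :
    ∫ ω, Real.exp (t * (X ω - μ)) ∂P ≤ Real.exp (t ^ 2 / 8) := by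
  have hint : Integrable X P := by
    refine (integrable_const (1:ℝ)).mono' hm.aestronglyMeasurable ?_
    filter_upwards [hb] with ω hω
    rw [Real.norm_eq_abs, abs_le]
    exact ⟨by linarith [hω.1], hω.2⟩
  have hμ0 : 0 ≤ μ := by
    rw [← hμ]
    exact integral_nonneg_of_ae (by filter_upwards [hb] with ω hω using hω.1)
  have hμ1 : μ ≤ 1 := by
    rw [← hμ]
    calc ∫ ω, X ω ∂P ≤ ∫ _, (1:ℝ) ∂P :=
          integral_mono_ae hint (integrable_const 1) (by filter_upwards [hb] with ω hω using hω.2)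
      _ = 1 := by simp
  have hptwise : ∀ᵐ ω ∂P, Real.exp (t * X ω) ≤ (1 - X ω) + X ω * Real.exp t := by
    filter_upwards [hb] with ω hω
    have h := convexOn_exp.2 (Set.mem_univ (0:ℝ)) (Set.mem_univ t)
      (by linarith [hω.2] : (0:ℝ) ≤ 1 - X ω) hω.1 (by ring)
    simpa [smul_eq_mul, mul_comm] using h
  have hintexp : Integrable (fun ω => Real.exp (t * X ω)) P := by
    refine (integrable_const (Real.exp t)).mono' ((hm.const_mul t).exp.aestronglyMeasurable) ?_
    filter_upwards [hb] with ω hω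
    rw [Real.norm_eq_abs, abs_of_pos (Real.exp_pos _)]
    exact Real.exp_le_exp.2 (by nlinarith [hω.1, hω.2])
  have hle : ∫ ω, Real.exp (t * X ω) ∂P ≤ 1 - μ + μ * Real.exp t := by
    calc ∫ ω, Real.exp (t * X ω) ∂P ≤ ∫ ω, ((1 - X ω) + X ω * Real.exp t) ∂P :=
          integral_mono_ae hintexp (((integrable_const 1).sub hint).add (hint.mul_const _)) hptwise
      _ = 1 - μ + μ * Real.exp t := by
          have h1 : (fun ω => (1 - X ω) + X ω * Real.exp t) =
              fun ω => (1:ℝ) + X ω * (Real.exp t - 1) := by funext ω; ring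
          rw [h1, integral_add (integrable_const 1) (hint.mul_const _),
            integral_mul_const, hμ]
          simp
          ring
  have hpos : (0:ℝ) < 1 - μ + μ * Real.exp t := by
    rcases eq_or_lt_of_le hμ0 with h | h
    · simp [← h]
    · nlinarith [Real.exp_pos t]
  calc ∫ ω, Real.exp (t * (X ω - μ)) ∂P
      = (∫ ω, Real.exp (t * X ω) ∂P) * Real.exp (-(t * μ)) := by
        have h1 : (fun ω => Real.exp (t * (X ω - μ))) =
            fun ω => Real.exp (t * X ω) * Real.exp (-(t * μ)) := by
          funext ω
          rw [← Real.exp_add]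
          congr 1; ring
        rw [h1, integral_mul_const]
    _ ≤ (1 - μ + μ * Real.exp t) * Real.exp (-(t * μ)) := by
        exact mul_le_mul_of_nonneg_right hle (Real.exp_pos _).le
    _ = Real.exp (Real.log (1 - μ + μ * Real.exp t) - t * μ) := by
        rw [Real.exp_sub, Real.exp_log hpos, div_eq_mul_inv, ← Real.exp_neg]
    _ ≤ Real.exp (t ^ 2 / 8) := Real.exp_le_exp.2 (hoef_log hμ0 hμ1 ht)

lemma onesided {Ω : Type*} {m : MeasurableSpace Ω} {P : Measure Ω}
    [IsProbabilityMeasure P] (n : ℕ) (hn : 1 ≤ n) (μ x : ℝ) (hx : 0 < x)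
    (X : ℕ → Ω → ℝ) (hmeas : ∀ i, Measurable (X i))
    (hindep : iIndepFun X P)
    (hbdd : ∀ i, ∀ᵐ ω ∂P, X i ω ∈ Set.Icc (0:ℝ) 1)
    (hmean : ∀ i, ∫ ω, X i ω ∂P = μ) :
    P {ω | ∃ i, 1 ≤ i ∧ i ≤ n ∧ x < ∑ j ∈ Finset.Icc 1 i, (X j ω - μ)} ≤
      ENNReal.ofReal (Real.exp (-2 * x ^ 2 / n)) := by
  have hn' : (0:ℝ) < n := by exact_mod_cast hn
  set t : ℝ := 4 * x / n with htdef
  have ht : 0 < t := by positivity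
  set Y : ℕ → Ω → ℝ := fun j ω => X j ω - μ with hYdef
  set S : ℕ → Ω → ℝ := fun i ω => ∑ j ∈ Finset.Icc 1 i, Y j ω with hSdef
  have hYmeas : ∀ j, Measurable (Y j) := fun j => (hmeas j).sub measurable_const
  have hiY : iIndepFun Y P :=
    hindep.comp (fun _ y => y - μ) (fun _ => measurable_id.sub measurable_const)
  have hSmeas : ∀ i, Measurable (S i) := fun i =>
    Finset.measurable_sum _ (fun j _ => hYmeas j)
  have hXint : ∀ j, Integrable (X j) P := by
    intro j
    refine (integrable_const (1:ℝ)).mono' (hmeas j).aestronglyMeasurable ?_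
    filter_upwards [hbdd j] with ω hω
    rw [Real.norm_eq_abs, abs_le]
    exact ⟨by linarith [hω.1], hω.2⟩
  have hYint : ∀ j, Integrable (Y j) P := fun j => (hXint j).sub (integrable_const μ)
  have hYzero : ∀ j, ∫ ω, Y j ω ∂P = 0 := by
    intro j
    rw [hYdef]
    rw [integral_sub (hXint j) (integrable_const μ), hmean j]
    simp
  have hYbd : ∀ j, ∀ᵐ ω ∂P, Y j ω ≤ 1 + |μ| := by
    intro j
    filter_upwards [hbdd j] with ω hω
    have := abs_le.1 (le_refl |μ|) -- dummy
    have h1 : -μ ≤ |μ| := neg_le_abs μ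
    simp only [hYdef]
    linarith [hω.2]
  have hYexp_int : ∀ (c : ℝ), 0 ≤ c → ∀ j, Integrable (fun ω => Real.exp (c * Y j ω)) P := by
    intro c hc j
    refine (integrable_const (Real.exp (c * (1 + |μ|)))).mono'
      (((hYmeas j).const_mul c).exp.aestronglyMeasurable) ?_
    filter_upwards [hYbd j] with ω hω
    rw [Real.norm_eq_abs, abs_of_pos (Real.exp_pos _)]
    exact Real.exp_le_exp.2 (mul_le_mul_of_nonneg_left hω hc)
  -- integrability of exp of partial sums
  have hSexp_int : ∀ s : Finset ℕ, Integrable (fun ω => Real.exp (t * ∑ j ∈ s, Y j ω)) P := by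
    intro s
    have := hiY.integrable_exp_mul_sum (t := t) hYmeas (s := s)
      (fun j _ => hYexp_int t ht.le j)
    simpa [Finset.sum_apply] using this
  -- one ≤ mgf of each Y j
  have hone : ∀ j, (1:ℝ) ≤ ∫ ω, Real.exp (t * Y j ω) ∂P := by
    intro j
    have h1 : ∫ ω, (t * Y j ω + 1) ∂P = 1 := by
      rw [integral_add ((hYint j).const_mul t) (integrable_const 1), integral_const_mul,
        hYzero j]
      simp
    rw [← h1]
    refine integral_mono (((hYint j).const_mul t).add (integrable_const 1))
      (hYexp_int t ht.le j) ?_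
    intro ω
    exact Real.add_one_le_exp _
  -- mgf bound for each Y j
  have hmgf1 : ∀ j, ∫ ω, Real.exp (t * Y j ω) ∂P ≤ Real.exp (t ^ 2 / 8) :=
    fun j => hoef_mgf (hmeas j) (hbdd j) (hmean j) ht.le
  -- mgf of sums as products
  have hmgf_sum : ∀ s : Finset ℕ,
      ∫ ω, Real.exp (t * ∑ j ∈ s, Y j ω) ∂P = ∏ j ∈ s, ∫ ω, Real.exp (t * Y j ω) ∂P := by
    intro s
    have := hiY.mgf_sum (t := t) hYmeas s
    simpa [mgf, Finset.sum_apply] using this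
  -- the sets
  set A : ℕ → Set Ω := fun i =>
    (⋂ j ∈ Finset.Ico 1 i, {ω | S j ω ≤ x}) ∩ {ω | x < S i ω} with hAdef
  have hAmeas : ∀ i, MeasurableSet (A i) := by
    intro i
    refine MeasurableSet.inter ?_ (measurableSet_lt measurable_const (hSmeas i))
    exact MeasurableSet.biInter (Set.to_countable _)
      (fun j _ => measurableSet_le (hSmeas j) measurable_const)
  have hAdisj : (↑(Finset.Icc 1 n) : Set ℕ).PairwiseDisjoint A := by
    intro i hi j hj hij
    rw [Finset.coe_Icc, Set.mem_Icc] at hi hj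
    wlog h : i < j generalizing i j
    · exact (this hj hi hij.symm (lt_of_le_of_ne (le_of_not_gt h) hij.symm)).symm
    refine Set.disjoint_left.2 fun ω hωi hωj => ?_
    have h1 : x < S i ω := hωi.2
    have h2 : S i ω ≤ x := by
      have hj1 := hωj.1
      simp only [Set.mem_iInter] at hj1
      exact hj1 i (Finset.mem_Ico.2 ⟨hi.1, h⟩)
    linarith
  have hEeq : {ω | ∃ i, 1 ≤ i ∧ i ≤ n ∧ x < ∑ j ∈ Finset.Icc 1 i, (X j ω - μ)} =
      ⋃ i ∈ Finset.Icc 1 n, A i := by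
    ext ω
    simp only [Set.mem_setOf_eq, Set.mem_iUnion, Finset.mem_Icc]
    constructor
    · rintro ⟨i, hi1, hin, hxi⟩
      have hex : ∃ k, 1 ≤ k ∧ k ≤ n ∧ x < S k ω := ⟨i, hi1, hin, hxi⟩
      classical
      obtain ⟨hk1, hkn, hkx⟩ := Nat.find_spec hex
      refine ⟨Nat.find hex, ⟨hk1, hkn⟩, ?_, hkx⟩
      simp only [Set.mem_iInter]
      intro j hj
      rw [Finset.mem_Ico] at hj
      simp only [Set.mem_setOf_eq]
      by_contra hcon
      push_neg at hcon
      exact Nat.find_min hex hj.2 ⟨hj.1, by omega, hcon⟩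
    · rintro ⟨i, hi, hωA⟩
      exact ⟨i, hi.1, hi.2, hωA.2⟩
  -- key per-set estimate
  have hkey : ∀ i ∈ Finset.Icc 1 n, (P (A i)).toReal ≤
      Real.exp (-(t * x)) * ∫ ω in A i, Real.exp (t * S n ω) ∂P := by
    intro i hi
    rw [Finset.mem_Icc] at hi
    classical
    set R : Ω → ℝ := fun ω => ∑ j ∈ Finset.Icc (i + 1) n, Y j ω with hRdef
    have hSn_split : ∀ ω, S n ω = S i ω + R ω := by
      intro ω
      have hsplit : Finset.Icc 1 n = Finset.Icc 1 i ∪ Finset.Icc (i + 1) n := by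
        ext k; simp only [Finset.mem_union, Finset.mem_Icc]; omega
      have hdisj : Disjoint (Finset.Icc 1 i) (Finset.Icc (i + 1) n) := by
        rw [Finset.disjoint_left]; intro a ha hb
        rw [Finset.mem_Icc] at ha hb; omega
      simp only [hSdef, hRdef]
      rw [hsplit, Finset.sum_union hdisj]
    -- the T functions on restricted vectors
    set Tf : ℕ → ((Finset.Icc 1 i : Finset ℕ) → ℝ) → ℝ := fun j v =>
      ∑ k ∈ Finset.univ.filter (fun k : (Finset.Icc 1 i : Finset ℕ) => (k : ℕ) ≤ j), v k
      with hTfdef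
    have hTfmeas : ∀ j, Measurable (Tf j) := fun j =>
      Finset.measurable_sum _ (fun k _ => measurable_pi_apply k)
    have hT : ∀ j, j ≤ i → ∀ ω, Tf j (fun k => Y (k : ℕ) ω) = S j ω := by
      intro j hj ω
      simp only [hTfdef]
      rw [Finset.sum_filter]
      rw [Finset.sum_coe_sort (Finset.Icc 1 i) (fun k => if k ≤ j then Y k ω else 0)]
      rw [← Finset.sum_filter]
      simp only [hSdef]
      congr 1
      ext k
      simp only [Finset.mem_filter, Finset.mem_Icc]
      omega
    set B : Set ((Finset.Icc 1 i : Finset ℕ) → ℝ) :=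
      (⋂ j ∈ Finset.Ico 1 i, {v | Tf j v ≤ x}) ∩ {v | x < Tf i v} with hBdef
    have hB : MeasurableSet B := by
      refine MeasurableSet.inter ?_ (measurableSet_lt measurable_const (hTfmeas i))
      exact MeasurableSet.biInter (Set.to_countable _)
        (fun j _ => measurableSet_le (hTfmeas j) measurable_const)
    set Φ : ((Finset.Icc 1 i : Finset ℕ) → ℝ) → ℝ :=
      B.indicator (fun v => Real.exp (t * Tf i v)) with hΦdef
    have hΦmeas : Measurable Φ := (((hTfmeas i).const_mul t).exp).indicator hB
    set Ψ : ((Finset.Icc (i + 1) n : Finset ℕ) → ℝ) → ℝ :=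
      fun v => Real.exp (t * ∑ k, v k) with hΨdef
    have hΨmeas : Measurable Ψ :=
      ((Finset.measurable_sum _ (fun k _ => measurable_pi_apply k)).const_mul t).exp
    have hdisj12 : Disjoint (Finset.Icc 1 i) (Finset.Icc (i + 1) n) := by
      rw [Finset.disjoint_left]; intro a ha hb
      rw [Finset.mem_Icc] at ha hb; omega
    have hIndep0 := hiY.indepFun_finset (Finset.Icc 1 i) (Finset.Icc (i + 1) n) hdisj12 hYmeas
    set F : Ω → ℝ := (A i).indicator (fun ω => Real.exp (t * S i ω)) with hFdef
    set G : Ω → ℝ := fun ω => Real.exp (t * R ω) with hGdef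
    have hΦcomp : (Φ ∘ fun ω (k : (Finset.Icc 1 i : Finset ℕ)) => Y (k : ℕ) ω) = F := by
      funext ω
      have hmem : ((fun k : (Finset.Icc 1 i : Finset ℕ) => Y (k : ℕ) ω) ∈ B) ↔ ω ∈ A i := by
        simp only [hBdef, hAdef, Set.mem_inter_iff, Set.mem_iInter, Set.mem_setOf_eq]
        constructor
        · rintro ⟨h1, h2⟩
          refine ⟨fun j hj => ?_, ?_⟩
          · have := h1 j hj
            rwa [hT j (le_of_lt (Finset.mem_Ico.1 hj).2) ω] at this
          · rwa [hT i le_rfl ω] at h2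
        · rintro ⟨h1, h2⟩
          refine ⟨fun j hj => ?_, ?_⟩
          · rw [hT j (le_of_lt (Finset.mem_Ico.1 hj).2) ω]; exact h1 j hj
          · rw [hT i le_rfl ω]; exact h2
      simp only [Function.comp_apply, hΦdef, hFdef]
      by_cases hω : ω ∈ A i
      · rw [Set.indicator_of_mem (hmem.2 hω), Set.indicator_of_mem hω, hT i le_rfl ω]
      · rw [Set.indicator_of_notMem (fun hc => hω (hmem.1 hc)),
          Set.indicator_of_notMem hω]
    have hΨcomp : (Ψ ∘ fun ω (k : (Finset.Icc (i + 1) n : Finset ℕ)) => Y (k : ℕ) ω) = G := by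
      funext ω
      simp only [Function.comp_apply, hΨdef, hGdef]
      congr 1
      rw [Finset.sum_coe_sort (Finset.Icc (i + 1) n) (fun k => Y k ω)]
    have hIndep : IndepFun F G P := by
      have := hIndep0.comp hΦmeas hΨmeas
      rwa [hΦcomp, hΨcomp] at this
    have hFint : Integrable F P := by
      have := (hSexp_int (Finset.Icc 1 i)).indicator (hAmeas i)
      exact this
    have hGint : Integrable G P := hSexp_int (Finset.Icc (i + 1) n)
    have hmul : ∫ ω, F ω * G ω ∂P = (∫ ω, F ω ∂P) * ∫ ω, G ω ∂P :=
      hIndep.integral_mul_eq_mul_integral hFint.aestronglyMeasurable hGint.aestronglyMeasurable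
    have hFG : ∀ ω, F ω * G ω = (A i).indicator (fun ω => Real.exp (t * S n ω)) ω := by
      intro ω
      by_cases hω : ω ∈ A i
      · simp only [hFdef, hGdef, Set.indicator_of_mem hω]
        rw [← Real.exp_add, hSn_split ω]
        ring_nf
      · simp only [hFdef, hGdef, Set.indicator_of_notMem hω, zero_mul]
    have hGone : (1:ℝ) ≤ ∫ ω, G ω ∂P := by
      have h1 : ∫ ω, G ω ∂P = ∏ j ∈ Finset.Icc (i + 1) n, ∫ ω, Real.exp (t * Y j ω) ∂P :=
        hmgf_sum (Finset.Icc (i + 1) n)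
      rw [h1]
      calc (1:ℝ) = ∏ _j ∈ Finset.Icc (i + 1) n, (1:ℝ) := by simp
        _ ≤ ∏ j ∈ Finset.Icc (i + 1) n, ∫ ω, Real.exp (t * Y j ω) ∂P :=
            Finset.prod_le_prod (fun j _ => zero_le_one) (fun j _ => hone j)
    have hFnonneg : (0:ℝ) ≤ ∫ ω, F ω ∂P := by
      refine integral_nonneg fun ω => ?_
      exact Set.indicator_nonneg (fun ω _ => (Real.exp_pos _).le) ω
    have step1 : Real.exp (t * x) * (P (A i)).toReal ≤ ∫ ω in A i, Real.exp (t * S i ω) ∂P := by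
      have := setIntegral_ge_of_const_le (c := Real.exp (t * x)) (hAmeas i) (measure_ne_top P _) ?_
        ((hSexp_int (Finset.Icc 1 i)).integrableOn)
      · rw [smul_eq_mul, mul_comm] at this; exact this
      intro ω hω
      exact Real.exp_le_exp.2 (mul_le_mul_of_nonneg_left (le_of_lt hω.2) ht.le)
    have step2 : ∫ ω in A i, Real.exp (t * S i ω) ∂P ≤ ∫ ω in A i, Real.exp (t * S n ω) ∂P := by
      have e1 : ∫ ω in A i, Real.exp (t * S i ω) ∂P = ∫ ω, F ω ∂P :=
        (integral_indicator (hAmeas i)).symm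
      have e2 : ∫ ω in A i, Real.exp (t * S n ω) ∂P = ∫ ω, F ω * G ω ∂P := by
        rw [show (fun ω => F ω * G ω) = (A i).indicator (fun ω => Real.exp (t * S n ω)) from
          funext hFG]
        exact (integral_indicator (hAmeas i)).symm
      rw [e1, e2, hmul]
      exact le_mul_of_one_le_right hFnonneg hGone
    calc (P (A i)).toReal
        = Real.exp (-(t * x)) * (Real.exp (t * x) * (P (A i)).toReal) := by
          rw [← mul_assoc, ← Real.exp_add]
          simp
      _ ≤ Real.exp (-(t * x)) * ∫ ω in A i, Real.exp (t * S n ω) ∂P :=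
          mul_le_mul_of_nonneg_left (step1.trans step2) (Real.exp_pos _).le
  -- assembling
  have hSn_int : Integrable (fun ω => Real.exp (t * S n ω)) P := hSexp_int (Finset.Icc 1 n)
  have hfull : ∫ ω, Real.exp (t * S n ω) ∂P ≤ Real.exp ((n : ℝ) * (t ^ 2 / 8)) := by
    have h1 : ∫ ω, Real.exp (t * S n ω) ∂P
        = ∏ j ∈ Finset.Icc 1 n, ∫ ω, Real.exp (t * Y j ω) ∂P := hmgf_sum (Finset.Icc 1 n)
    rw [h1]
    calc ∏ j ∈ Finset.Icc 1 n, ∫ ω, Real.exp (t * Y j ω) ∂P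
        ≤ ∏ _j ∈ Finset.Icc 1 n, Real.exp (t ^ 2 / 8) :=
          Finset.prod_le_prod (fun j _ => integral_nonneg fun ω => (Real.exp_pos _).le)
            (fun j _ => hmgf1 j)
      _ = Real.exp (t ^ 2 / 8) ^ (Finset.Icc 1 n).card := Finset.prod_const _
      _ = Real.exp ((n : ℝ) * (t ^ 2 / 8)) := by
          rw [Nat.card_Icc, Real.exp_nat_mul]
          norm_num
  have htot : (P {ω | ∃ i, 1 ≤ i ∧ i ≤ n ∧
      x < ∑ j ∈ Finset.Icc 1 i, (X j ω - μ)}).toReal ≤ Real.exp (-2 * x ^ 2 / n) := by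
    rw [hEeq, measure_biUnion_finset hAdisj (fun i _ => hAmeas i),
      ENNReal.toReal_sum (fun i _ => measure_ne_top P _)]
    calc ∑ i ∈ Finset.Icc 1 n, (P (A i)).toReal
        ≤ ∑ i ∈ Finset.Icc 1 n,
            Real.exp (-(t * x)) * ∫ ω in A i, Real.exp (t * S n ω) ∂P :=
          Finset.sum_le_sum hkey
      _ = Real.exp (-(t * x)) * ∑ i ∈ Finset.Icc 1 n, ∫ ω in A i, Real.exp (t * S n ω) ∂P := by
          rw [Finset.mul_sum]
      _ = Real.exp (-(t * x)) *
            ∫ ω in ⋃ i ∈ Finset.Icc 1 n, A i, Real.exp (t * S n ω) ∂P := by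
          rw [integral_biUnion_finset (Finset.Icc 1 n) (fun i _ => hAmeas i) hAdisj
            (fun i _ => hSn_int.integrableOn)]
      _ ≤ Real.exp (-(t * x)) * ∫ ω, Real.exp (t * S n ω) ∂P := by
          refine mul_le_mul_of_nonneg_left ?_ (Real.exp_pos _).le
          exact setIntegral_le_integral hSn_int
            (Filter.Eventually.of_forall fun ω => (Real.exp_pos _).le)
      _ ≤ Real.exp (-(t * x)) * Real.exp ((n : ℝ) * (t ^ 2 / 8)) :=
          mul_le_mul_of_nonneg_left hfull (Real.exp_pos _).le
      _ = Real.exp (-2 * x ^ 2 / n) := by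
          rw [← Real.exp_add]
          congr 1
          rw [htdef]
          field_simp
          ring
  have hne : P {ω | ∃ i, 1 ≤ i ∧ i ≤ n ∧
      x < ∑ j ∈ Finset.Icc 1 i, (X j ω - μ)} ≠ ⊤ := measure_ne_top P _
  rw [← ENNReal.ofReal_toReal hne]
  exact ENNReal.ofReal_le_ofReal htot


theorem stmt_6 {Ω : Type*} {m : MeasurableSpace Ω} {P : Measure Ω}
    [IsProbabilityMeasure P] (n : ℕ) (hn : 1 ≤ n) (μ x : ℝ) (hx : 0 < x)
    (X : ℕ → Ω → ℝ) (hmeas : ∀ i, Measurable (X i))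
    (hindep : iIndepFun X P)
    (hident : ∀ i, IdentDistrib (X i) (X 1) P P)
    (hbdd : ∀ i, ∀ᵐ ω ∂P, X i ω ∈ Set.Icc (0:ℝ) 1)
    (hmean : ∀ i, ∫ ω, X i ω ∂P = μ) :
    P {ω | ∃ i, 1 ≤ i ∧ i ≤ n ∧
        x < |∑ j ∈ Finset.Icc 1 i, (X j ω - μ)|} ≤
      ENNReal.ofReal (2 * Real.exp (-2 * x ^ 2 / n)) := by
  have hXint : ∀ j, Integrable (X j) P := by
    intro j
    refine (integrable_const (1:ℝ)).mono' (hmeas j).aestronglyMeasurable ?_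
    filter_upwards [hbdd j] with ω hω
    rw [Real.norm_eq_abs, abs_le]
    exact ⟨by linarith [hω.1], hω.2⟩
  have h1 := onesided n hn μ x hx X hmeas hindep hbdd hmean
  have h2 := onesided n hn (1 - μ) x hx (fun i ω => 1 - X i ω)
    (fun i => measurable_const.sub (hmeas i))
    (hindep.comp (fun _ y => 1 - y) (fun _ => measurable_const.sub measurable_id))
    (fun i => by
      filter_upwards [hbdd i] with ω hω
      exact ⟨by linarith [hω.2], by linarith [hω.1]⟩)
    (fun i => by
      rw [integral_sub (integrable_const 1) (hXint i), hmean i]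
      simp)
  have hsub : {ω | ∃ i, 1 ≤ i ∧ i ≤ n ∧ x < |∑ j ∈ Finset.Icc 1 i, (X j ω - μ)|} ⊆
      {ω | ∃ i, 1 ≤ i ∧ i ≤ n ∧ x < ∑ j ∈ Finset.Icc 1 i, (X j ω - μ)} ∪
      {ω | ∃ i, 1 ≤ i ∧ i ≤ n ∧
        x < ∑ j ∈ Finset.Icc 1 i, ((fun i ω => 1 - X i ω) j ω - (1 - μ))} := by
    intro ω hω
    obtain ⟨i, h1i, h2i, habs⟩ := hω
    rcases lt_abs.1 habs with h | h
    · exact Or.inl ⟨i, h1i, h2i, h⟩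
    · refine Or.inr ⟨i, h1i, h2i, ?_⟩
      have heq : ∑ j ∈ Finset.Icc 1 i, ((fun i ω => 1 - X i ω) j ω - (1 - μ))
          = -∑ j ∈ Finset.Icc 1 i, (X j ω - μ) := by
        rw [← Finset.sum_neg_distrib]
        exact Finset.sum_congr rfl (fun j _ => by ring)
      rw [heq]
      exact h
  calc P {ω | ∃ i, 1 ≤ i ∧ i ≤ n ∧ x < |∑ j ∈ Finset.Icc 1 i, (X j ω - μ)|}
      ≤ P ({ω | ∃ i, 1 ≤ i ∧ i ≤ n ∧ x < ∑ j ∈ Finset.Icc 1 i, (X j ω - μ)} ∪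
          {ω | ∃ i, 1 ≤ i ∧ i ≤ n ∧
            x < ∑ j ∈ Finset.Icc 1 i, ((fun i ω => 1 - X i ω) j ω - (1 - μ))}) :=
        measure_mono hsub
    _ ≤ P {ω | ∃ i, 1 ≤ i ∧ i ≤ n ∧ x < ∑ j ∈ Finset.Icc 1 i, (X j ω - μ)} +
        P {ω | ∃ i, 1 ≤ i ∧ i ≤ n ∧
          x < ∑ j ∈ Finset.Icc 1 i, ((fun i ω => 1 - X i ω) j ω - (1 - μ))} :=
        measure_union_le _ _
    _ ≤ ENNReal.ofReal (Real.exp (-2 * x ^ 2 / n)) +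
        ENNReal.ofReal (Real.exp (-2 * x ^ 2 / n)) := add_le_add h1 h2
    _ = ENNReal.ofReal (2 * Real.exp (-2 * x ^ 2 / n)) := by
        rw [← ENNReal.ofReal_add (Real.exp_pos _).le (Real.exp_pos _).le]
        congr 1
        ring
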